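/- arXiv:2307.09471 — 3 statements merged into one kernel-verified Lean document; each statement's English description precedes it below -/
import Mathlib

section
/- Let f(z) = 1 + (1/l) z^l + Σ_{k>l} f̂(k) z^k be a power series with real coefficients and positive radius of convergence, where l > 1. Suppose g(r) = r e^{i·θ̃(r)} where θ̃(r) = θ_j + O(r^{l_j′ − l}) as r → 0⁺, θ_j = 2πj/l, and l_j′ ≥ l_j > l. Then for any k ∈ L(f) with 0 < k < l_j one has e^{ik θ_j} = 1 and (g(r))^k = r^k + O(r^{l_j}) as r → 0⁺. -/
open Asymptotics

/-- For `k ∈ L(f)` with `0 < k < l_j` one has `e^{ikθ_j} = 1` and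
`(g(r))^k = r^k + O(r^{l_j})` as `r → 0⁺`, where `g(r) = r e^{iθ̃(r)}` and
`θ̃(r) = θ_j + O(r^{l_j' - l})`. -/
theorem g_pow_asymptotic (L : Set ℕ) (l lj lj' j : ℕ)
    (hl : 1 < l) (hlL : l ∈ L) (hlmin : ∀ k ∈ L, 0 < k → l ≤ k)
    (hj : 1 ≤ j) (hjm : j ≤ l / 2)
    (hljL : lj ∈ L) (hljnd : ¬ (l ∣ j * lj))
    (hljmin : ∀ k ∈ L, 0 < k → k < lj → l ∣ j * k)
    (hlj : l < lj) (hlj' : lj ≤ lj')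
    (θtilde : ℝ → ℝ)
    (hθ : (fun r : ℝ => θtilde r - 2 * Real.pi * j / l)
            =O[nhdsWithin 0 (Set.Ioi 0)] (fun r : ℝ => r ^ (lj' - l)))
    (g : ℝ → ℂ) (hg : ∀ r : ℝ, g r = r * Complex.exp (Complex.I * θtilde r)) :
    ∀ k ∈ L, 0 < k → k < lj →
      Complex.exp (Complex.I * k * (2 * Real.pi * j / l)) = 1 ∧
      (fun r : ℝ => g r ^ k - (r : ℂ) ^ k)
        =O[nhdsWithin 0 (Set.Ioi 0)] (fun r : ℝ => r ^ lj) := by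
  intro k hkL hk hklj
  have hl0 : (0:ℕ) < l := lt_trans one_pos hl
  have hdvd : l ∣ j * k := hljmin k hkL hk hklj
  obtain ⟨m, hm⟩ := hdvd
  have hlC : (l : ℂ) ≠ 0 := by exact_mod_cast hl0.ne'
  have hexp1 : Complex.exp (Complex.I * k * (2 * Real.pi * j / l)) = 1 := by
    rw [Complex.exp_eq_one_iff]
    refine ⟨(m : ℤ), ?_⟩
    have hmC : (j : ℂ) * k = l * m := by exact_mod_cast hm
    field_simp
    push_cast
    ring_nf
    ring_nf at hmC
    rw [mul_comm] at hmC
    linear_combination hmC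
  refine ⟨hexp1, ?_⟩
  -- set up notation
  set θj : ℝ := 2 * Real.pi * j / l with hθj
  set n : ℕ := lj' - l with hn
  have hn1 : 1 ≤ n := by omega
  have hkl : l ≤ k := hlmin k hkL hk
  have hexp : k + n ≥ lj := by omega
  obtain ⟨c, hc⟩ := hθ.bound
  set c' : ℝ := |c| with hc'
  have hcc' : c ≤ c' := le_abs_self c
  have hc'0 : 0 ≤ c' := abs_nonneg c
  -- eventually small
  have hmem : ∀ᶠ r : ℝ in nhdsWithin 0 (Set.Ioi 0), r ∈ Set.Ioi (0:ℝ) :=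
    self_mem_nhdsWithin
  have htend : Filter.Tendsto (fun r : ℝ => (k:ℝ) * (c' * |r| ^ n))
      (nhdsWithin 0 (Set.Ioi 0)) (nhds 0) := by
    have : Filter.Tendsto (fun r : ℝ => (k:ℝ) * (c' * |r| ^ n)) (nhds 0) (nhds 0) := by
      have hcont : Continuous (fun r : ℝ => (k:ℝ) * (c' * |r| ^ n)) := by continuity
      have := hcont.tendsto 0
      simpa [zero_pow (by omega : n ≠ 0)] using this
    exact this.mono_left nhdsWithin_le_nhds
  have hsmall : ∀ᶠ r : ℝ in nhdsWithin 0 (Set.Ioi 0), (k:ℝ) * (c' * |r| ^ n) ≤ 1 :=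
    htend.eventually (ge_mem_nhds one_pos)
  have hle1 : ∀ᶠ r : ℝ in nhdsWithin 0 (Set.Ioi 0), |r| ≤ 1 := by
    have : ∀ᶠ r : ℝ in nhds (0:ℝ), |r| ≤ 1 := by
      filter_upwards [eventually_abs_sub_lt (0:ℝ) one_pos] with r hr
      simpa using hr.le
    exact this.filter_mono nhdsWithin_le_nhds
  rw [isBigO_iff]
  refine ⟨2 * (k * c'), ?_⟩
  filter_upwards [hc, hmem, hsmall, hle1] with r hcr hr hsm h1
  have hr0 : 0 < r := hr
  have hδ : |θtilde r - θj| ≤ c' * r ^ n := by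
    have : ‖θtilde r - θj‖ ≤ c * ‖r ^ n‖ := hcr
    calc |θtilde r - θj| ≤ c * |r ^ n| := this
      _ ≤ c' * |r ^ n| := by
          exact mul_le_mul_of_nonneg_right hcc' (abs_nonneg _)
      _ = c' * r ^ n := by rw [abs_pow, abs_of_pos hr0]
  set δ : ℝ := θtilde r - θj with hδdef
  -- rewrite g r ^ k - r ^ k
  have hkey : g r ^ k - (r:ℂ) ^ k = (r:ℂ) ^ k * (Complex.exp ((k * δ : ℝ) * Complex.I) - 1) := by
    rw [hg r, mul_pow, ← Complex.exp_nat_mul]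
    have hθt : (θtilde r : ℂ) = (θj : ℂ) + (δ : ℂ) := by push_cast [hδdef]; ring
    have : (k:ℂ) * (Complex.I * θtilde r)
        = Complex.I * k * θj + ((k * δ : ℝ) : ℂ) * Complex.I := by
      rw [hθt]; push_cast; ring
    rw [this, Complex.exp_add]
    have h2 : Complex.exp (Complex.I * k * (θj : ℂ)) = 1 := by
      have heq : (Complex.I * k * (θj : ℂ)) = Complex.I * k * (2 * Real.pi * j / l) := by
        rw [hθj]; push_cast; ring
      rw [heq]; exact hexp1
    rw [h2, one_mul]
    ring
  rw [hkey]
  have hnorm1 : ‖Complex.exp ((k * δ : ℝ) * Complex.I) - 1‖ ≤ 2 * (k * |δ|) := by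
    have habs : ‖((k * δ : ℝ) : ℂ) * Complex.I‖ = k * |δ| := by
      rw [norm_mul, Complex.norm_I, mul_one, Complex.norm_real, Real.norm_eq_abs, abs_mul, Nat.abs_cast]
    have hle : ‖((k * δ : ℝ) : ℂ) * Complex.I‖ ≤ 1 := by
      rw [habs]
      calc (k:ℝ) * |δ| ≤ k * (c' * r ^ n) := by
            exact mul_le_mul_of_nonneg_left hδ (Nat.cast_nonneg k)
        _ = k * (c' * |r| ^ n) := by rw [abs_of_pos hr0]
        _ ≤ 1 := hsm
    have := Complex.norm_exp_sub_one_le hle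
    rw [habs] at this
    exact this
  calc ‖(r:ℂ) ^ k * (Complex.exp ((k * δ : ℝ) * Complex.I) - 1)‖
      = r ^ k * ‖Complex.exp ((k * δ : ℝ) * Complex.I) - 1‖ := by
        rw [norm_mul, norm_pow, Complex.norm_real, Real.norm_eq_abs, abs_of_pos hr0]
    _ ≤ r ^ k * (2 * (k * |δ|)) := by
        exact mul_le_mul_of_nonneg_left hnorm1 (pow_nonneg hr0.le _)
    _ ≤ r ^ k * (2 * (k * (c' * r ^ n))) := by
        refine mul_le_mul_of_nonneg_left ?_ (pow_nonneg hr0.le _)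
        refine mul_le_mul_of_nonneg_left ?_ (by norm_num)
        exact mul_le_mul_of_nonneg_left hδ (Nat.cast_nonneg k)
    _ = 2 * (k * c') * r ^ (k + n) := by rw [pow_add]; ring
    _ ≤ 2 * (k * c') * r ^ lj := by
        refine mul_le_mul_of_nonneg_left ?_ (by positivity)
        exact pow_le_pow_of_le_one hr0.le (by rwa [abs_of_pos hr0] at h1) hexp
    _ ≤ 2 * (k * c') * ‖r ^ lj‖ := by
        rw [Real.norm_eq_abs, abs_of_pos (pow_pos hr0 _)]
end

section
/- Let p(r) be a real power series near 0 with μ_p(r) = r p′(r)/p(r) = r^l + r^{l+1} G(r) for some function G analytic at 0, where l ≥ 1. Then there exists a unique function r(t), analytic at t = 0 with r(0) = 0 and r′(0) = 1, such that μ_p(r(t)) = t^l for all small t > 0. -/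
open Filter Topology

lemma analyticAt_real_log_one : AnalyticAt ℝ Real.log 1 := by
  have h1 : AnalyticAt ℝ (fun x : ℝ => (Complex.log (Complex.ofRealCLM x)).re) 1 := by
    have hlog : AnalyticAt ℂ Complex.log ((1 : ℝ) : ℂ) := by
      apply analyticAt_clog; simp [Complex.slitPlane]
    have hofReal : AnalyticAt ℝ (fun x : ℝ => (x : ℂ)) 1 := Complex.ofRealCLM.analyticAt 1
    have hcomp : AnalyticAt ℝ (fun x : ℝ => Complex.log (x : ℂ)) 1 :=
      (hlog.restrictScalars).comp hofReal
    exact (Complex.reCLM.analyticAt _).comp hcomp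
  apply h1.congr
  filter_upwards [eventually_gt_nhds (show (0:ℝ) < 1 by norm_num)] with x hx
  simp only [Complex.ofRealCLM_apply]
  rw [Complex.log_re, Complex.norm_real, Real.norm_eq_abs, abs_of_pos hx]

/-- Existence and uniqueness (as germs at 0) of an analytic solution `r(t)` of
`μ_p(r(t)) = t^l` with `r(0) = 0`, `r'(0) = 1`. -/
theorem inverse_mu_analytic (p G : ℝ → ℝ) (hp : AnalyticAt ℝ p 0) (hp0 : p 0 = 1)
    (l : ℕ) (hl : 1 ≤ l) (hG : AnalyticAt ℝ G 0)
    (hμ : ∀ᶠ s in nhds (0 : ℝ), s * deriv p s / p s = s ^ l + s ^ (l + 1) * G s) :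
    ∃ r : ℝ → ℝ,
      (AnalyticAt ℝ r 0 ∧ r 0 = 0 ∧ deriv r 0 = 1 ∧
        ∀ᶠ t in nhdsWithin 0 (Set.Ioi 0), r t * deriv p (r t) / p (r t) = t ^ l) ∧
      ∀ r' : ℝ → ℝ,
        (AnalyticAt ℝ r' 0 ∧ r' 0 = 0 ∧ deriv r' 0 = 1 ∧
          ∀ᶠ t in nhdsWithin 0 (Set.Ioi 0), r' t * deriv p (r' t) / p (r' t) = t ^ l) →
        r' =ᶠ[nhds 0] r := by
  classical
  have hl0 : (l : ℝ) ≠ 0 := Nat.cast_ne_zero.mpr (by omega)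
  set g : ℝ → ℝ := fun s => 1 + s * G s with hg_def
  have hg_an : AnalyticAt ℝ g 0 := analyticAt_const.add (analyticAt_id.mul hG)
  have hg0 : g 0 = 1 := by simp [hg_def]
  set φ : ℝ → ℝ := fun s => Real.exp (Real.log (g s) / l) with hφ_def
  have hφ_an : AnalyticAt ℝ φ 0 := by
    have hlog : AnalyticAt ℝ (fun s => Real.log (g s)) 0 := by
      have h2 : AnalyticAt ℝ Real.log (g 0) := by rw [hg0]; exact analyticAt_real_log_one
      exact h2.comp hg_an
    exact analyticAt_rexp.comp (hlog.div analyticAt_const hl0)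
  have hφ0 : φ 0 = 1 := by simp [hφ_def, hg0]
  have hφpos : ∀ s, 0 < φ s := fun s => Real.exp_pos _
  set F : ℝ → ℝ := fun s => s * φ s with hF_def
  have hF_an : AnalyticAt ℝ F 0 := analyticAt_id.mul hφ_an
  have hF0 : F 0 = 0 := by simp [hF_def]
  have hFpos : ∀ s, 0 < s → 0 < F s := fun s hs => mul_pos hs (hφpos s)
  have hFderiv : deriv F 0 = 1 := by
    rw [hF_def, deriv_fun_mul differentiableAt_fun_id hφ_an.differentiableAt]
    simp [hφ0]
  have hFstrict : HasStrictDerivAt F 1 0 := by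
    have h1 : HasStrictDerivAt F (deriv F 0) 0 :=
      hF_an.contDiffAt.hasStrictDerivAt (n := 1) one_ne_zero
    rwa [hFderiv] at h1
  have hgpos : ∀ᶠ s in 𝓝 (0:ℝ), 0 < g s := by
    have hcg : Tendsto g (𝓝 0) (𝓝 1) := by
      rw [← hg0]; exact hg_an.continuousAt
    exact hcg.eventually (eventually_gt_nhds one_pos)
  have hμF : ∀ᶠ s in 𝓝 (0:ℝ), s * deriv p s / p s = (F s) ^ l := by
    filter_upwards [hμ, hgpos] with s hs hgs
    have hφl : φ s ^ l = g s := by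
      rw [hφ_def, ← Real.exp_nat_mul]
      have h2 : (l : ℝ) * (Real.log (g s) / l) = Real.log (g s) := by field_simp
      rw [h2, Real.exp_log hgs]
    calc s * deriv p s / p s = s ^ l + s ^ (l + 1) * G s := hs
      _ = s ^ l * g s := by rw [hg_def]; ring
      _ = s ^ l * φ s ^ l := by rw [hφl]
      _ = (F s) ^ l := by rw [hF_def]; ring
  -- local analytic inverse of F
  set e := hFstrict.hasStrictFDerivAt_equiv one_ne_zero with he_def
  set Φ := e.toOpenPartialHomeomorph F with hΦ_def
  have hΦcoe : ⇑Φ = F := rfl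
  have hΦ0 : (0:ℝ) ∈ Φ.source := e.mem_toOpenPartialHomeomorph_source
  set r : ℝ → ℝ := ⇑Φ.symm with hr_def
  have hr0 : r 0 = 0 := by
    have h := Φ.left_inv hΦ0
    rwa [hΦcoe, hF0] at h
  have hrStrict : HasStrictDerivAt r 1 0 := by
    have h := hFstrict.to_localInverse (hf' := one_ne_zero)
    rw [hF0, inv_one] at h
    exact h
  have hr_deriv : deriv r 0 = 1 := hrStrict.hasDerivAt.deriv
  have hr_an : AnalyticAt ℝ r 0 := by
    have hfd : fderiv ℝ F 0 = ((ContinuousLinearEquiv.refl ℝ ℝ : ℝ ≃L[ℝ] ℝ) : ℝ →L[ℝ] ℝ) := by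
      apply ContinuousLinearMap.ext_ring
      rw [fderiv_apply_one_eq_deriv, hFderiv]
      simp
    have h := Φ.analyticAt_symm' (i := ContinuousLinearEquiv.refl ℝ ℝ) hΦ0
      (by rw [hΦcoe]; exact hF_an) (by rw [hΦcoe]; exact hfd)
    rwa [hΦcoe, hF0] at h
  have hright : ∀ᶠ t in 𝓝 (0:ℝ), F (r t) = t := by
    have h := Φ.eventually_right_inverse' hΦ0
    rw [hΦcoe, hF0] at h
    exact h
  have hleft : ∀ᶠ s in 𝓝 (0:ℝ), r (F s) = s := by
    have h := Φ.eventually_left_inverse hΦ0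
    rw [hΦcoe] at h
    exact h
  have hr_tendsto : Tendsto r (𝓝 0) (𝓝 0) := by
    have := hr_an.continuousAt
    rw [ContinuousAt, hr0] at this
    exact this
  have hmain : ∀ᶠ t in 𝓝 (0:ℝ), r t * deriv p (r t) / p (r t) = t ^ l := by
    filter_upwards [hright, hr_tendsto.eventually hμF] with t h1 h2
    rw [h2, h1]
  refine ⟨r, ⟨hr_an, hr0, hr_deriv, hmain.filter_mono nhdsWithin_le_nhds⟩, ?_⟩
  rintro r' ⟨hr'_an, hr'0, hr'_deriv, hr'μ⟩
  have hr'_tendsto : Tendsto r' (𝓝 0) (𝓝 0) := by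
    have := hr'_an.continuousAt
    rw [ContinuousAt, hr'0] at this
    exact this
  -- r' is positive on small positive t
  have hIoi_le : 𝓝[>] (0:ℝ) ≤ 𝓝[≠] (0:ℝ) :=
    nhdsWithin_mono _ (fun x hx => ne_of_gt hx)
  have hr'pos : ∀ᶠ t in 𝓝[>] (0:ℝ), 0 < r' t := by
    have hd : HasDerivAt r' 1 0 := by
      have := hr'_an.differentiableAt.hasDerivAt
      rwa [hr'_deriv] at this
    have hslope := hasDerivAt_iff_tendsto_slope.mp hd
    have h1 : ∀ᶠ t in 𝓝[≠] (0:ℝ), 0 < slope r' 0 t :=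
      hslope.eventually (eventually_gt_nhds one_pos)
    filter_upwards [(h1.filter_mono hIoi_le), self_mem_nhdsWithin] with t ht ht0
    have : slope r' 0 t = r' t / t := by
      rw [slope_def_field]; simp [hr'0]
    rw [this] at ht
    have := mul_pos ht (show (0:ℝ) < t from ht0)
    rwa [div_mul_cancel₀ _ (ne_of_gt ht0)] at this
  have hkey : ∀ᶠ t in 𝓝[>] (0:ℝ), r' t = r t := by
    filter_upwards [hr'μ, (hr'_tendsto.eventually hμF).filter_mono nhdsWithin_le_nhds,
      (hr'_tendsto.eventually hleft).filter_mono nhdsWithin_le_nhds,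
      hr'pos, self_mem_nhdsWithin, hmain.filter_mono nhdsWithin_le_nhds]
      with t h1 h2 h3 h4 h5 h6
    have hFt : (F (r' t)) ^ l = t ^ l := by rw [← h2, h1]
    have hFrt : F (r' t) = t :=
      (pow_left_inj₀ (hFpos _ h4).le h5.le (Nat.one_le_iff_ne_zero.mp hl)).mp hFt
    rw [← h3, hFrt]
  have hfreq : ∃ᶠ t in 𝓝[≠] (0:ℝ), r' t = r t :=
    (hkey.frequently).filter_mono hIoi_le
  exact (hr'_an.frequently_eq_iff_eventually_eq hr_an).mp hfreq
end

section
/- For all real t ≥ 0 and all integers s, the quantity 1 + 2 e^{−t(5−√5)/4} cos(2πs/5 − t√((5+√5)/8)) + 2 e^{−t(5+√5)/4} cos(4πs/5 − t√((5−√5)/8)) is non-negative. -/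
open Real Finset Nat

/-! Auxiliary trig values at multiples of `π/5`. -/

private lemma sqrt5_sq : Real.sqrt 5 ^ 2 = 5 := Real.sq_sqrt (by norm_num)

private lemma cos_two_pi_div_five' : Real.cos (2 * Real.pi / 5) = (Real.sqrt 5 - 1) / 4 := by
  have h : (2:ℝ) * Real.pi / 5 = 2 * (Real.pi / 5) := by ring
  rw [h, Real.cos_two_mul, Real.cos_pi_div_five]
  nlinarith [sqrt5_sq]

private lemma sin_two_pi_div_five' :
    Real.sin (2 * Real.pi / 5) = Real.sqrt ((5 + Real.sqrt 5) / 8) := by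
  have hl : (0:ℝ) ≤ 2 * Real.pi / 5 := by positivity
  have hu : 2 * Real.pi / 5 ≤ Real.pi := by nlinarith [Real.pi_pos]
  rw [Real.sin_eq_sqrt_one_sub_cos_sq hl hu, cos_two_pi_div_five']
  congr 1
  nlinarith [sqrt5_sq]

private lemma cos_four_pi_div_five' :
    Real.cos (4 * Real.pi / 5) = -(1 + Real.sqrt 5) / 4 := by
  have h : (4:ℝ) * Real.pi / 5 = 2 * (2 * Real.pi / 5) := by ring
  rw [h, Real.cos_two_mul, cos_two_pi_div_five']
  nlinarith [sqrt5_sq]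

private lemma sin_four_pi_div_five' :
    Real.sin (4 * Real.pi / 5) = Real.sqrt ((5 - Real.sqrt 5) / 8) := by
  have hl : (0:ℝ) ≤ 4 * Real.pi / 5 := by positivity
  have hu : 4 * Real.pi / 5 ≤ Real.pi := by nlinarith [Real.pi_pos]
  rw [Real.sin_eq_sqrt_one_sub_cos_sq hl hu, cos_four_pi_div_five']
  congr 1
  nlinarith [sqrt5_sq]

/-! The primitive fifth root of unity. -/

noncomputable def ζ5 : ℂ := Complex.exp (2 * Real.pi * Complex.I / 5)

private lemma ζ5_prim : IsPrimitiveRoot ζ5 5 := by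
  have h := Complex.isPrimitiveRoot_exp 5 (by norm_num)
  convert h using 2
  simp [ζ5]

private lemma ζ5_ne_zero : ζ5 ≠ 0 := Complex.exp_ne_zero _

private lemma zpow_ζ5 (j : ℤ) :
    ζ5 ^ j = Complex.exp ((2 * Real.pi * j / 5 : ℝ) * Complex.I) := by
  rw [ζ5, ← Complex.exp_int_mul]
  congr 1
  push_cast
  ring

private lemma sum_zpow_ζ5 (m : ℤ) :
    ∑ k ∈ Finset.range 5, ζ5 ^ ((k : ℤ) * m) = if (5:ℤ) ∣ m then 5 else 0 := by
  by_cases h : (5:ℤ) ∣ m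
  · rw [if_pos h]
    rw [Finset.sum_congr rfl (fun k _ => (ζ5_prim.zpow_eq_one_iff_dvd _).mpr (h.mul_left _))]
    simp
  · rw [if_neg h]
    have hne : ζ5 ^ m ≠ 1 := fun hh => h ((ζ5_prim.zpow_eq_one_iff_dvd m).mp hh)
    have hrw : ∀ k ∈ Finset.range 5, ζ5 ^ ((k : ℤ) * m) = (ζ5 ^ m) ^ k := by
      intro k _
      rw [mul_comm, zpow_mul, zpow_natCast]
    rw [Finset.sum_congr rfl hrw, geom_sum_eq hne]
    have h5 : (ζ5 ^ m) ^ 5 = 1 := by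
      rw [← zpow_natCast (ζ5 ^ m), ← zpow_mul, mul_comm, zpow_mul, zpow_natCast,
        ζ5_prim.pow_eq_one, one_zpow]
    rw [h5]
    simp


private lemma term_summable (t : ℝ) (j : ℕ → ℤ) :
    Summable (fun n : ℕ => (t : ℂ) ^ n / n ! * ζ5 ^ (j n)) := by
  apply Summable.of_norm
  apply Summable.of_nonneg_of_le (fun n => norm_nonneg _)
    (fun n => ?_) (NormedSpace.norm_expSeries_div_summable (t : ℂ))
  rw [norm_mul, norm_zpow]
  have : ‖ζ5‖ = 1 := by
    rw [ζ5, Complex.norm_exp]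
    norm_num
  rw [this]
  simp

private lemma key_nonneg (t : ℝ) (ht : 0 ≤ t) (s : ℤ) :
    0 ≤ (∑ k ∈ Finset.range 5,
        Complex.exp ((t : ℂ) * ζ5 ^ (-(k : ℤ))) * ζ5 ^ ((k : ℤ) * s)).re := by
  have hterm : ∀ k ∈ Finset.range 5,
      Complex.exp ((t : ℂ) * ζ5 ^ (-(k : ℤ))) * ζ5 ^ ((k : ℤ) * s)
        = ∑' n : ℕ, (t : ℂ) ^ n / n ! * ζ5 ^ ((k : ℤ) * (s - n)) := by
    intro k _
    rw [Complex.exp_eq_exp_ℂ, NormedSpace.exp_eq_tsum_div, ← tsum_mul_right]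
    congr 1
    ext n
    rw [mul_pow, ← zpow_natCast (ζ5 ^ (-(k:ℤ))), ← zpow_mul]
    have harg : (-(k:ℤ) * n) + (k:ℤ) * s = (k:ℤ) * (s - n) := by ring
    calc (t:ℂ) ^ n * ζ5 ^ (-(k:ℤ) * (n:ℤ)) / n ! * ζ5 ^ ((k:ℤ) * s)
        = (t:ℂ) ^ n / n ! * (ζ5 ^ (-(k:ℤ) * (n:ℤ)) * ζ5 ^ ((k:ℤ) * s)) := by ring
      _ = (t:ℂ) ^ n / n ! * ζ5 ^ ((k:ℤ) * (s - (n:ℤ))) := by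
          rw [← zpow_add₀ ζ5_ne_zero, harg]
  have hswap := Summable.tsum_finsetSum (f := fun (k : ℕ) (n : ℕ) => (t:ℂ) ^ n / n ! * ζ5 ^ ((k:ℤ) * (s - n)))
    (s := Finset.range 5) (fun k _ => term_summable t (fun n => (k : ℤ) * (s - n)))
  rw [Finset.sum_congr rfl hterm, ← hswap]
  have hsum : ∀ n : ℕ,
      ∑ k ∈ Finset.range 5, (t : ℂ) ^ n / n ! * ζ5 ^ ((k : ℤ) * (s - n))
        = ((t ^ n / n ! * (if (5:ℤ) ∣ s - n then 5 else 0) : ℝ) : ℂ) := by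
    intro n
    rw [← Finset.mul_sum, sum_zpow_ζ5]
    push_cast
    split <;> simp
  rw [tsum_congr hsum, ← Complex.ofReal_tsum, Complex.ofReal_re]
  apply tsum_nonneg
  intro n
  positivity


private lemma term_re (t : ℝ) (m s : ℤ) :
    (Complex.exp ((t:ℂ) * ζ5 ^ (-m)) * ζ5 ^ (m * s)).re
      = Real.exp (t * Real.cos (2*Real.pi*m/5)) *
        Real.cos (2*Real.pi*m*s/5 - t * Real.sin (2*Real.pi*m/5)) := by
  rw [zpow_ζ5 (-m), zpow_ζ5 (m*s), Complex.exp_mul_I, ← Complex.ofReal_cos,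
    ← Complex.ofReal_sin, ← Complex.exp_add, Complex.exp_re]
  simp only [Complex.add_re, Complex.add_im, Complex.mul_re, Complex.mul_im,
    Complex.I_re, Complex.I_im, Complex.ofReal_re, Complex.ofReal_im]
  push_cast
  rw [show 2*Real.pi*(-(m:ℝ))/5 = -(2*Real.pi*m/5) by ring, Real.cos_neg, Real.sin_neg]
  ring_nf

/-- Non-negativity of the trigonometric-exponential sum of Example 2. -/
theorem trig_exp_nonneg (t : ℝ) (ht : 0 ≤ t) (s : ℤ) :
    0 ≤ 1 +
        2 * Real.exp (-t * (5 - Real.sqrt 5) / 4) *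
          Real.cos (2 * Real.pi * s / 5 - t * Real.sqrt ((5 + Real.sqrt 5) / 8)) +
        2 * Real.exp (-t * (5 + Real.sqrt 5) / 4) *
          Real.cos (4 * Real.pi * s / 5 - t * Real.sqrt ((5 - Real.sqrt 5) / 8)) := by
  have key := key_nonneg t ht s
  have hre : (∑ k ∈ Finset.range 5,
        Complex.exp ((t : ℂ) * ζ5 ^ (-(k : ℤ))) * ζ5 ^ ((k : ℤ) * s)).re
      = ∑ k ∈ Finset.range 5, Real.exp (t * Real.cos (2*Real.pi*(k:ℤ)/5)) *
          Real.cos (2*Real.pi*(k:ℤ)*s/5 - t * Real.sin (2*Real.pi*(k:ℤ)/5)) := by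
    rw [Complex.re_sum]
    exact Finset.sum_congr rfl fun k _ => term_re t k s
  rw [hre, Finset.sum_range_succ, Finset.sum_range_succ, Finset.sum_range_succ,
    Finset.sum_range_succ, Finset.sum_range_one] at key
  have σ1 := sin_two_pi_div_five'
  have σ2 := sin_four_pi_div_five'
  have L0a : 2*Real.pi*(((0:ℕ):ℤ):ℝ)/5 = 0 := by push_cast; ring
  have L0b : 2*Real.pi*(((0:ℕ):ℤ):ℝ)*s/5 = 0 := by push_cast; ring
  rw [L0a, L0b] at key
  have L1a : 2*Real.pi*(((1:ℕ):ℤ):ℝ)/5 = 2*Real.pi/5 := by push_cast; ring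
  have L1b : 2*Real.pi*(((1:ℕ):ℤ):ℝ)*s/5 = 2*Real.pi*s/5 := by push_cast; ring
  rw [L1a, L1b, cos_two_pi_div_five', σ1] at key
  have L2a : 2*Real.pi*(((2:ℕ):ℤ):ℝ)/5 = 4*Real.pi/5 := by push_cast; ring
  have L2b : 2*Real.pi*(((2:ℕ):ℤ):ℝ)*s/5 = 4*Real.pi*s/5 := by push_cast; ring
  rw [L2a, L2b, cos_four_pi_div_five', σ2] at key
  have L3a : 2*Real.pi*(((3:ℕ):ℤ):ℝ)/5 = 2*Real.pi - 4*Real.pi/5 := by push_cast; ring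
  rw [L3a, Real.cos_two_pi_sub, Real.sin_two_pi_sub, cos_four_pi_div_five', σ2] at key
  have L3b : 2*Real.pi*(((3:ℕ):ℤ):ℝ)*s/5 - t * -Real.sqrt ((5 - Real.sqrt 5)/8)
      = (s:ℝ) * (2*Real.pi) - (4*Real.pi*s/5 - t * Real.sqrt ((5 - Real.sqrt 5)/8)) := by
    push_cast; ring
  rw [L3b, Real.cos_int_mul_two_pi_sub] at key
  have L4a : 2*Real.pi*(((4:ℕ):ℤ):ℝ)/5 = 2*Real.pi - 2*Real.pi/5 := by push_cast; ring
  rw [L4a, Real.cos_two_pi_sub, Real.sin_two_pi_sub, cos_two_pi_div_five', σ1] at key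
  have L4b : 2*Real.pi*(((4:ℕ):ℤ):ℝ)*s/5 - t * -Real.sqrt ((5 + Real.sqrt 5)/8)
      = (s:ℝ) * (2*Real.pi) - (2*Real.pi*s/5 - t * Real.sqrt ((5 + Real.sqrt 5)/8)) := by
    push_cast; ring
  rw [L4b, Real.cos_int_mul_two_pi_sub] at key
  simp only [Real.cos_zero, Real.sin_zero, mul_zero, mul_one, zero_sub, sub_zero, neg_zero] at key
  have e1 : Real.exp (-t) * Real.exp (t * ((Real.sqrt 5 - 1) / 4))
      = Real.exp (-t * (5 - Real.sqrt 5) / 4) := by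
    rw [← Real.exp_add]; congr 1; ring
  have e2 : Real.exp (-t) * Real.exp (t * (-(1 + Real.sqrt 5) / 4))
      = Real.exp (-t * (5 + Real.sqrt 5) / 4) := by
    rw [← Real.exp_add]; congr 1; ring
  have e3 : Real.exp (-t) * Real.exp t = 1 := by
    rw [← Real.exp_add]; simp
  have h := mul_nonneg (Real.exp_pos (-t)).le key
  calc (0:ℝ) ≤ Real.exp (-t) * (Real.exp t
        + Real.exp (t * ((Real.sqrt 5 - 1) / 4)) *
            Real.cos (2*Real.pi*s/5 - t * Real.sqrt ((5 + Real.sqrt 5)/8))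
        + Real.exp (t * (-(1 + Real.sqrt 5) / 4)) *
            Real.cos (4*Real.pi*s/5 - t * Real.sqrt ((5 - Real.sqrt 5)/8))
        + Real.exp (t * (-(1 + Real.sqrt 5) / 4)) *
            Real.cos (4*Real.pi*s/5 - t * Real.sqrt ((5 - Real.sqrt 5)/8))
        + Real.exp (t * ((Real.sqrt 5 - 1) / 4)) *
            Real.cos (2*Real.pi*s/5 - t * Real.sqrt ((5 + Real.sqrt 5)/8))) := h
    _ = 1 + 2 * Real.exp (-t * (5 - Real.sqrt 5) / 4) *
          Real.cos (2 * Real.pi * s / 5 - t * Real.sqrt ((5 + Real.sqrt 5) / 8)) +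
        2 * Real.exp (-t * (5 + Real.sqrt 5) / 4) *
          Real.cos (4 * Real.pi * s / 5 - t * Real.sqrt ((5 - Real.sqrt 5) / 8)) := by
      linear_combination e3 + 2 * Real.cos (2*Real.pi*s/5 - t * Real.sqrt ((5 + Real.sqrt 5)/8)) * e1
        + 2 * Real.cos (4*Real.pi*s/5 - t * Real.sqrt ((5 - Real.sqrt 5)/8)) * e2
end
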